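/- Let γ > 0, let Δ : ℝ → ℝ be continuous, and let x : ℝ → ℝ be differentiable with x′(t) = −γ·Δ(t)²·x(t) for all t ≥ 0, and suppose x(0) ≠ 0. Then x(t) → 0 as t → ∞ if and only if ∫₀^∞ Δ(s)² ds = ∞ (i.e., if and only if Δ restricted to [0, ∞) is not square-integrable). -/

import Mathlib

open Filter MeasureTheory

theorem drem_convergence_iff_not_square_integrable
    (γ : ℝ) (hγ : 0 < γ)
    (Δ : ℝ → ℝ) (hΔ : Continuous Δ)
    (x : ℝ → ℝ) (hx : Differentiable ℝ x)
    (hx' : ∀ t ≥ (0:ℝ), deriv x t = -γ * (Δ t) ^ 2 * x t)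
    (hx0 : x 0 ≠ 0) :
    Tendsto x atTop (nhds 0) ↔
      ∫⁻ s in Set.Ici (0:ℝ), ENNReal.ofReal ((Δ s) ^ 2) = ⊤ := by
  set f : ℝ → ℝ := fun s => Δ s ^ 2 with hfdef
  have hfc : Continuous f := by fun_prop
  have hfnn : ∀ s, 0 ≤ f s := fun s => sq_nonneg _
  set J : ℝ → ℝ := fun t => ∫ s in (0:ℝ)..t, f s with hJdef
  -- J is monotone
  have hJmono : Monotone J := by
    intro a b hab
    have h1 : IntervalIntegrable f volume 0 a := hfc.intervalIntegrable _ _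
    have h2 : IntervalIntegrable f volume a b := hfc.intervalIntegrable _ _
    have := intervalIntegral.integral_add_adjacent_intervals h1 h2
    have hnn : 0 ≤ ∫ s in a..b, f s :=
      intervalIntegral.integral_nonneg hab (fun s _ => hfnn s)
    simp only [hJdef]
    linarith [this]
  -- solution formula: x t = x 0 * exp (-(γ * J t)) for t ≥ 0
  have hsol : ∀ t ≥ (0:ℝ), x t = x 0 * Real.exp (-(γ * J t)) := by
    intro t ht
    have key : ∀ u ∈ Set.Icc (0:ℝ) t, x u * Real.exp (γ * J u) = x 0 * Real.exp (γ * J 0) := by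
      intro u hu
      have hcont : ContinuousOn (fun u => x u * Real.exp (γ * J u)) (Set.Icc 0 t) := by
        apply Continuous.continuousOn
        have hxc : Continuous x := hx.continuous
        have hJc : Continuous J := continuous_iff_continuousAt.2 fun y =>
          (hfc.integral_hasStrictDerivAt 0 y).hasDerivAt.continuousAt
        fun_prop
      refine constant_of_has_deriv_right_zero hcont (fun y hy => ?_) u hu
      have hJd : HasDerivAt J (f y) y := (hfc.integral_hasStrictDerivAt 0 y).hasDerivAt
      have hxd : HasDerivAt x (-γ * f y * x y) y := by
        have := (hx y).hasDerivAt
        rwa [hx' y hy.1] at this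
      have hd : HasDerivAt (fun u => x u * Real.exp (γ * J u))
          ((-γ * f y * x y) * Real.exp (γ * J y) + x y * (Real.exp (γ * J y) * (γ * f y))) y :=
        hxd.mul ((hJd.const_mul γ).exp)
      have hz : (-γ * f y * x y) * Real.exp (γ * J y) + x y * (Real.exp (γ * J y) * (γ * f y)) = 0 := by
        ring
      rw [hz] at hd
      exact hd.hasDerivWithinAt
    have h0 : J 0 = 0 := by simp [hJdef]
    have hk := key t ⟨ht, le_refl t⟩
    rw [h0, mul_zero, Real.exp_zero, mul_one] at hk
    rw [← hk, Real.exp_neg, mul_assoc, mul_inv_cancel₀ (Real.exp_pos (γ * J t)).ne', mul_one]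
  -- integrability on Ici iff lintegral finite
  have hmeas : AEStronglyMeasurable f (volume.restrict (Set.Ici (0:ℝ))) :=
    hfc.aestronglyMeasurable
  have hLint : IntegrableOn f (Set.Ici (0:ℝ)) ↔
      (∫⁻ s in Set.Ici (0:ℝ), ENNReal.ofReal (f s)) ≠ ⊤ := by
    constructor
    · intro h
      exact ((hasFiniteIntegral_iff_ofReal (ae_of_all _ hfnn)).mp h.2).ne
    · intro h
      exact ⟨hmeas, (hasFiniteIntegral_iff_ofReal (ae_of_all _ hfnn)).mpr (lt_top_iff_ne_top.mpr h)⟩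
  -- Tendsto J atTop atTop ↔ ¬ IntegrableOn
  have hJtop : Tendsto J atTop atTop ↔ ¬ IntegrableOn f (Set.Ici (0:ℝ)) := by
    constructor
    · intro hJ hint
      have hint' : IntegrableOn f (Set.Ioi (0:ℝ)) := hint.mono_set Set.Ioi_subset_Ici_self
      have := MeasureTheory.intervalIntegral_tendsto_integral_Ioi 0 hint' tendsto_id
      exact not_tendsto_nhds_of_tendsto_atTop hJ _ this
    · intro hint
      by_contra hJ
      -- J monotone not tendsto atTop → bounded
      have hbdd : ∃ C, ∀ t, J t ≤ C := by
        by_contra hC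
        push_neg at hC
        apply hJ
        apply tendsto_atTop_atTop_of_monotone hJmono
        intro b
        obtain ⟨t, ht⟩ := hC b
        exact ⟨t, ht.le⟩
      obtain ⟨C, hC⟩ := hbdd
      apply hint
      have : IntegrableOn f (Set.Ioi (0:ℝ)) := by
        apply MeasureTheory.integrableOn_Ioi_of_intervalIntegral_norm_bounded C 0
          (fun i => hfc.integrableOn_Ioc) tendsto_id
        filter_upwards with i
        have : (fun s => ‖f s‖) = f := by
          funext s; exact Real.norm_of_nonneg (hfnn s)
        rw [this]
        exact hC i
      rwa [integrableOn_Ici_iff_integrableOn_Ioi]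
  -- main chain
  have hxeq : x =ᶠ[atTop] fun t => x 0 * Real.exp (-(γ * J t)) := by
    filter_upwards [eventually_ge_atTop (0:ℝ)] with t ht using hsol t ht
  have hgoal : (∫⁻ s in Set.Ici (0:ℝ), ENNReal.ofReal ((Δ s) ^ 2)) =
      ∫⁻ s in Set.Ici (0:ℝ), ENNReal.ofReal (f s) := rfl
  have hfin : (∫⁻ s in Set.Ici (0:ℝ), ENNReal.ofReal (f s) = ⊤) ↔
      ¬ IntegrableOn f (Set.Ici (0:ℝ)) :=
    ⟨fun h hi => (hLint.mp hi) h, fun h => by by_contra h'; exact h (hLint.mpr h')⟩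
  rw [tendsto_congr' hxeq, hgoal, hfin, ← hJtop]
  constructor
  · intro h
    have h2 : Tendsto (fun t => (x 0)⁻¹ * (x 0 * Real.exp (-(γ * J t)))) atTop
        (nhds ((x 0)⁻¹ * 0)) := h.const_mul _
    simp only [inv_mul_cancel_left₀ hx0, mul_zero] at h2
    rw [Real.tendsto_exp_comp_nhds_zero, tendsto_neg_atBot_iff] at h2
    exact (tendsto_const_mul_atTop_of_pos hγ).mp h2
  · intro h
    have h1 := (tendsto_const_mul_atTop_of_pos hγ).mpr h
    have h2 := Real.tendsto_exp_comp_nhds_zero.mpr (tendsto_neg_atBot_iff.mpr h1)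
    simpa using h2.const_mul (x 0)
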